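/- Set a₁ = 6, a₂ = 13, a₃ = 14, a₄ = 15, a₅ = 16, and for each i ∈ {1,…,5} let αᵢ be the least positive integer α such that α·aᵢ belongs to the additive submonoid of ℕ generated by the other four numbers {aⱼ : j ≠ i}. Then α₁ = 5 and α₂ = α₃ = α₄ = α₅ = 2; moreover 5a₁ = 2a₄, 2a₂ = 2a₁ + a₃, 2a₃ = 2a₁ + a₅, 2a₄ = a₃ + a₅, and 2a₅ = a₁ + 2a₂. -/
import Mathlib


/-- The minimal generators `a₁ = 6, a₂ = 13, a₃ = 14, a₄ = 15, a₅ = 16` of the numerical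
semigroup `H₁₂`. -/
def genH12 : Fin 5 → ℕ := ![6, 13, 14, 15, 16]

/-- `αᵢ` is the least positive integer `α` with `α·aᵢ` in the submonoid generated by the
other four generators. -/
noncomputable def alphaH12 (i : Fin 5) : ℕ :=
  sInf {n : ℕ | 0 < n ∧
    (n * genH12 i : ℕ) ∈ AddSubmonoid.closure (genH12 '' {j : Fin 5 | j ≠ i})}

lemma gen_mem_closure (i j : Fin 5) (h : j ≠ i) :
    genH12 j ∈ AddSubmonoid.closure (genH12 '' {j : Fin 5 | j ≠ i}) :=
  AddSubmonoid.subset_closure ⟨j, h, rfl⟩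

/-- bounding submonoid for i = 0 -/
def M0 : AddSubmonoid ℕ where
  carrier := {n | n = 0 ∨ (13 ≤ n ∧ n ≠ 18 ∧ n ≠ 24)}
  zero_mem' := Or.inl rfl
  add_mem' := by intro a b ha hb; simp only [Set.mem_setOf_eq] at *; omega

lemma mem_M0 {n : ℕ} : n ∈ M0 ↔ (n = 0 ∨ (13 ≤ n ∧ n ≠ 18 ∧ n ≠ 24)) := Iff.rfl

/-- bounding submonoid for i = 1,2,3,4 : excludes `e` with `13 ≤ e < 18`. -/
def Mgen (e : ℕ) (he : 13 ≤ e ∧ e < 18) : AddSubmonoid ℕ where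
  carrier := {n | n = 0 ∨ n = 6 ∨ (12 ≤ n ∧ n ≠ e)}
  zero_mem' := Or.inl rfl
  add_mem' := by intro a b ha hb; simp only [Set.mem_setOf_eq] at *; omega

lemma mem_Mgen {e n : ℕ} {he : 13 ≤ e ∧ e < 18} :
    n ∈ Mgen e he ↔ (n = 0 ∨ n = 6 ∨ (12 ≤ n ∧ n ≠ e)) := Iff.rfl

theorem alpha_values_H12 :
    alphaH12 0 = 5 ∧ alphaH12 1 = 2 ∧ alphaH12 2 = 2 ∧ alphaH12 3 = 2 ∧ alphaH12 4 = 2 ∧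
    5 * genH12 0 = 2 * genH12 3 ∧
    2 * genH12 1 = 2 * genH12 0 + genH12 2 ∧
    2 * genH12 2 = 2 * genH12 0 + genH12 4 ∧
    2 * genH12 3 = genH12 2 + genH12 4 ∧
    2 * genH12 4 = genH12 0 + 2 * genH12 1 := by
  have h0 : alphaH12 0 = 5 := by
    have hmem : 5 ∈ {n : ℕ | 0 < n ∧
        (n * genH12 0 : ℕ) ∈ AddSubmonoid.closure (genH12 '' {j : Fin 5 | j ≠ 0})} := by
      refine ⟨by norm_num, ?_⟩
      have : (5 * genH12 0 : ℕ) = genH12 3 + genH12 3 := rfl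
      rw [this]
      exact add_mem (gen_mem_closure 0 3 (by decide)) (gen_mem_closure 0 3 (by decide))
    refine le_antisymm (Nat.sInf_le hmem) (le_csInf ⟨5, hmem⟩ ?_)
    rintro m ⟨hm, hmc⟩
    by_contra h
    push_neg at h
    have hle : AddSubmonoid.closure (genH12 '' {j : Fin 5 | j ≠ 0}) ≤ M0 := by
      rw [AddSubmonoid.closure_le]
      rintro x ⟨j, hj, rfl⟩
      fin_cases j
      · simp at hj
      all_goals exact Or.inr (by norm_num [genH12])
    have hx := hle hmc
    rw [mem_M0] at hx
    have h6 : genH12 0 = 6 := rfl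
    rw [h6] at hx
    interval_cases m <;> omega
  have key : ∀ (i : Fin 5) (e : ℕ) (he : 13 ≤ e ∧ e < 18), genH12 i = e →
      (∀ j : Fin 5, j ≠ i → genH12 j ∈ Mgen e he) →
      (2 * genH12 i : ℕ) ∈ AddSubmonoid.closure (genH12 '' {j : Fin 5 | j ≠ i}) →
      alphaH12 i = 2 := by
    intro i e he hgi hM h2
    have hmem : 2 ∈ {n : ℕ | 0 < n ∧
        (n * genH12 i : ℕ) ∈ AddSubmonoid.closure (genH12 '' {j : Fin 5 | j ≠ i})} :=
      ⟨by norm_num, h2⟩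
    refine le_antisymm (Nat.sInf_le hmem) (le_csInf ⟨2, hmem⟩ ?_)
    rintro m ⟨hm, hmc⟩
    by_contra h
    push_neg at h
    interval_cases m
    have hle : AddSubmonoid.closure (genH12 '' {j : Fin 5 | j ≠ i}) ≤ Mgen e he := by
      rw [AddSubmonoid.closure_le]
      rintro x ⟨j, hj, rfl⟩
      exact hM j hj
    have hx := hle hmc
    rw [mem_Mgen] at hx
    rw [hgi] at hx
    omega
  have hMj : ∀ (i : Fin 5) (e : ℕ) (he : 13 ≤ e ∧ e < 18),
      (∀ j : Fin 5, (12 ≤ genH12 j ∧ genH12 j ≠ e) ∨ genH12 j = 6 ∨ j = i) →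
      (∀ j : Fin 5, j ≠ i → genH12 j ∈ Mgen e he) := by
    intro i e he h j hj
    rw [mem_Mgen]
    rcases h j with h' | h' | h'
    · exact Or.inr (Or.inr h')
    · exact Or.inr (Or.inl h')
    · exact absurd h' hj
  have h1 : alphaH12 1 = 2 := by
    refine key 1 13 (by norm_num) rfl (hMj 1 13 _ (by decide)) ?_
    have : (2 * genH12 1 : ℕ) = genH12 0 + (genH12 0 + genH12 2) := rfl
    rw [this]
    exact add_mem (gen_mem_closure 1 0 (by decide))
      (add_mem (gen_mem_closure 1 0 (by decide)) (gen_mem_closure 1 2 (by decide)))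
  have h2 : alphaH12 2 = 2 := by
    refine key 2 14 (by norm_num) rfl (hMj 2 14 _ (by decide)) ?_
    have : (2 * genH12 2 : ℕ) = genH12 0 + (genH12 0 + genH12 4) := rfl
    rw [this]
    exact add_mem (gen_mem_closure 2 0 (by decide))
      (add_mem (gen_mem_closure 2 0 (by decide)) (gen_mem_closure 2 4 (by decide)))
  have h3 : alphaH12 3 = 2 := by
    refine key 3 15 (by norm_num) rfl (hMj 3 15 _ (by decide)) ?_
    have : (2 * genH12 3 : ℕ) = genH12 2 + genH12 4 := rfl
    rw [this]
    exact add_mem (gen_mem_closure 3 2 (by decide)) (gen_mem_closure 3 4 (by decide))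
  have h4 : alphaH12 4 = 2 := by
    refine key 4 16 (by norm_num) rfl (hMj 4 16 _ (by decide)) ?_
    have : (2 * genH12 4 : ℕ) = genH12 0 + (genH12 1 + genH12 1) := rfl
    rw [this]
    exact add_mem (gen_mem_closure 4 0 (by decide))
      (add_mem (gen_mem_closure 4 1 (by decide)) (gen_mem_closure 4 1 (by decide)))
  exact ⟨h0, h1, h2, h3, h4, rfl, rfl, rfl, rfl, rfl⟩
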